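/- Let G be a labelled graph, H a terminal subgraph of the linking graph G/≈, K = π⁻¹(H), and let m be such that no word of length ≥ m has presentations both in K and in the subgraph induced by the complement of K. If u is a word of length l ≥ 2m + 1 with a presentation in K and there is a chain in L(G) from u to a word v, then v_{[m+1,l]} has a presentation in K. -/

import Mathlib

/-! Common definitions: labelled graphs, walks, follower sets, the linking
relation, subshifts over `ℤ → A`, chains, and attractors. -/

structure LGraph (A : Type) where
  V : Type
  E : Type
  [finV : Finite V]
  [finE : Finite E]
  s : E → V
  t : E → V
  lab : E → A

attribute [instance] LGraph.finV LGraph.finE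

namespace LGraph

variable {A : Type}

/-- `Walk G u v es` : the list of edges `es` forms a walk from `u` to `v`. -/
inductive Walk (G : LGraph A) : G.V → G.V → List G.E → Prop
  | nil (v : G.V) : Walk G v v []
  | cons {w : G.V} {es : List G.E} (e : G.E) (h : Walk G (G.t e) w es) :
      Walk G (G.s e) w (e :: es)

/-- There is an edge from `u` to `v`. -/
def EdgeRel (G : LGraph A) (u v : G.V) : Prop := ∃ e : G.E, G.s e = u ∧ G.t e = v

/-- `v` is reachable from `u` by a directed walk. -/
def Reach (G : LGraph A) : G.V → G.V → Prop := Relation.ReflTransGen G.EdgeRel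

/-- `u` and `v` lie in the same strongly connected component. -/
def SameComp (G : LGraph A) (u v : G.V) : Prop := G.Reach u v ∧ G.Reach v u

/-- The number of strongly connected components of `G`. -/
noncomputable def numComponents (G : LGraph A) : ℕ :=
  Nat.card {K : Set G.V // ∃ v : G.V, K = {u : G.V | G.SameComp v u}}

/-- The restricted follower set of `v` : words labelling walks starting at `v`
that stay inside the strongly connected component of `v`. -/
def FollowR (G : LGraph A) (v : G.V) : Set (List A) :=
  {w | ∃ (u : G.V) (es : List G.E), G.Walk v u es ∧ es.map G.lab = w ∧
        ∀ e ∈ es, G.SameComp v (G.s e) ∧ G.SameComp v (G.t e)}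

/-- Two vertices are linked iff their restricted follower sets have infinite
intersection. -/
def Linked (G : LGraph A) (u v : G.V) : Prop := (G.FollowR u ∩ G.FollowR v).Infinite

/-- `≈` : the reflexive-transitive closure of the linked relation. -/
def Approx (G : LGraph A) : G.V → G.V → Prop := Relation.ReflTransGen G.Linked

/-- One step in the linking graph `G/≈` (lifted to `G`): either an edge of `G`
or a jump between linked vertices. -/
def GenStep (G : LGraph A) (u v : G.V) : Prop := G.EdgeRel u v ∨ G.Linked u v

/-- Reachability in the linking graph `G/≈`, expressed on vertices of `G`. -/
def GenReach (G : LGraph A) : G.V → G.V → Prop := Relation.ReflTransGen G.GenStep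

/-- The language of `G` : words labelling finite walks in `G`. -/
def Lang (G : LGraph A) : Set (List A) :=
  {w | ∃ (u v : G.V) (es : List G.E), G.Walk u v es ∧ es.map G.lab = w}

/-- `w` has a presentation in the subgraph of `G` induced by the vertex set `S`. -/
def PresIn (G : LGraph A) (S : Set G.V) (w : List A) : Prop :=
  ∃ (u v : G.V) (es : List G.E), G.Walk u v es ∧ es.map G.lab = w ∧
    u ∈ S ∧ v ∈ S ∧ ∀ e ∈ es, G.s e ∈ S ∧ G.t e ∈ S

/-- A presentation of the first `n` letters of `w`, with explicit vertex
sequence `v` and edge sequence `e`. -/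
def PresFun (G : LGraph A) (n : ℕ) (w : ℕ → A) (v : ℕ → G.V) (e : ℕ → G.E) : Prop :=
  ∀ i < n, G.s (e i) = v i ∧ G.t (e i) = v (i + 1) ∧ G.lab (e i) = w i

/-- `S` is a union of `≈`-equivalence classes, i.e. `S = π⁻¹(π(S))` for the
projection `π : G → G/≈`. -/
def SaturatedSet (G : LGraph A) (S : Set G.V) : Prop :=
  ∀ u v : G.V, G.Approx u v → (u ∈ S ↔ v ∈ S)

/-- No edge leaves `S` : together with saturation this says that the image of
`S` in `G/≈` is a terminal subgraph. -/
def ForwardClosed (G : LGraph A) (S : Set G.V) : Prop :=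
  ∀ e : G.E, G.s e ∈ S → G.t e ∈ S

/-- Every vertex has an ingoing and an outgoing edge. -/
def Essential (G : LGraph A) : Prop :=
  ∀ v : G.V, (∃ e : G.E, G.t e = v) ∧ (∃ e : G.E, G.s e = v)

/-- A biinfinite presentation of `x` (vertex sequence `v`, edge sequence `e`)
staying in the vertex set `S`. -/
def BiPresIn (G : LGraph A) (S : Set G.V) (x : ℤ → A) (v : ℤ → G.V) (e : ℤ → G.E) : Prop :=
  ∀ i : ℤ, G.s (e i) = v i ∧ G.t (e i) = v (i + 1) ∧ G.lab (e i) = x i ∧ v i ∈ S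

/-- The subshift of biinfinite label sequences of biinfinite walks of `G`
staying in `S`. -/
def SigmaIn (G : LGraph A) (S : Set G.V) : Set (ℤ → A) :=
  {x | ∃ v e, G.BiPresIn S x v e}

/-- The sofic subshift `Σ(G)`. -/
def Sigma' (G : LGraph A) : Set (ℤ → A) := G.SigmaIn Set.univ

/-- The linking graph `G/≈` is strongly connected. -/
def StronglyConnectedQuot (G : LGraph A) : Prop := ∀ u v : G.V, G.GenReach u v

/-- The linking graph `G/≈` is periodic : its vertices can be partitioned into
`n > 1` classes (indexed by `ZMod n`, each a union of `≈`-classes) so that every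
edge advances the class index by one. -/
def PeriodicQuot (G : LGraph A) : Prop :=
  ∃ n : ℕ, 1 < n ∧ ∃ c : G.V → ZMod n,
    (∀ u v : G.V, G.Approx u v → c u = c v) ∧ ∀ e : G.E, c (G.t e) = c (G.s e) + 1

/-- The label product `G * H`. -/
def labelProduct (G H : LGraph A) : LGraph A where
  V := G.V × H.V
  E := {p : G.E × H.E // G.lab p.1 = H.lab p.2}
  s := fun p => (G.s p.1.1, H.s p.1.2)
  t := fun p => (G.t p.1.1, H.t p.1.2)
  lab := fun p => G.lab p.1.1

end LGraph

section Subshift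

variable {A : Type}

/-- The shift map `σ`. -/
def shift (x : ℤ → A) : ℤ → A := fun i => x (i + 1)

open Classical in
/-- The metric `ρ(x,y) = 2^{-n}` where `n` is minimal with `x_n ≠ y_n` or
`x_{-n} ≠ y_{-n}` (and `ρ(x,x) = 0`). -/
noncomputable def rho (x y : ℤ → A) : ℝ :=
  if x = y then 0
  else (2 : ℝ) ^ (-((sInf {n : ℕ | ∃ i : ℤ, i.natAbs = n ∧ x i ≠ y i} : ℕ) : ℤ))

/-- Closedness with respect to the metric `rho`. -/
def RhoClosed (Sig : Set (ℤ → A)) : Prop :=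
  ∀ x : ℤ → A, (∀ ε : ℝ, 0 < ε → ∃ y ∈ Sig, rho x y < ε) → x ∈ Sig

/-- A subshift : a closed, strongly shift-invariant subset of `A^ℤ`. -/
def IsSubshift (Sig : Set (ℤ → A)) : Prop :=
  RhoClosed Sig ∧ shift '' Sig = Sig

/-- The language of the subshift `Sig` : all finite factors of its points. -/
def lang (Sig : Set (ℤ → A)) : Set (List A) :=
  {w | ∃ x ∈ Sig, ∃ k : ℤ, ∀ (i : ℕ) (h : i < w.length), w.get ⟨i, h⟩ = x (k + i)}

/-- The central factor `x_{[-l,l]}` of a biinfinite word. -/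
def central (x : ℤ → A) (l : ℕ) : List A :=
  (List.range (2 * l + 1)).map fun i => x ((i : ℤ) - (l : ℤ))

/-- `ChainWord L u v n w` : `w` is a chain of length `n` from `u` to `v` in the
language `L` : `|w| = n + |u|`, `w` has prefix `u` and suffix `v`, and every
factor of `w` of length at most `|u|` belongs to `L`. -/
def ChainWord (L : Set (List A)) (u v : List A) (n : ℕ) (w : List A) : Prop :=
  u.length = v.length ∧ w.length = n + u.length ∧
  w.take u.length = u ∧ w.drop n = v ∧
  ∀ z : List A, z <:+: w → z.length ≤ u.length → z ∈ L

/-- An `ε`-chain of length `n > 0` from `x` to `y` inside `Sig`. -/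
def EpsChain (Sig : Set (ℤ → A)) (ε : ℝ) (n : ℕ) (x y : ℤ → A) : Prop :=
  0 < n ∧ ∃ z : ℕ → ℤ → A, z 0 = x ∧ z n = y ∧ (∀ i ≤ n, z i ∈ Sig) ∧
    ∀ i < n, rho (shift (z i)) (z (i + 1)) < ε

/-- The chain relation of `(Sig, σ)`. -/
def ChainRel (Sig : Set (ℤ → A)) (x y : ℤ → A) : Prop :=
  ∀ ε : ℝ, 0 < ε → ∃ n : ℕ, EpsChain Sig ε n x y

/-- Chain-transitivity. -/
def ChainTransitive (Sig : Set (ℤ → A)) : Prop :=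
  ∀ x ∈ Sig, ∀ y ∈ Sig, ChainRel Sig x y

/-- Chain-mixing. -/
def ChainMixing (Sig : Set (ℤ → A)) : Prop :=
  ∀ x ∈ Sig, ∀ y ∈ Sig, ∀ ε : ℝ, 0 < ε → ∃ k : ℕ, ∀ n, k < n → EpsChain Sig ε n x y

/-- Distance from a point to a set, with respect to `rho`. -/
noncomputable def distTo (x : ℤ → A) (Y : Set (ℤ → A)) : ℝ := sInf (rho x '' Y)

/-- `Y` is an attractor of the dynamical system `(Sig, σ)`. -/
def IsAttractor (Sig Y : Set (ℤ → A)) : Prop :=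
  Y.Nonempty ∧ Y ⊆ Sig ∧ RhoClosed Y ∧ shift '' Y = Y ∧
  (∀ ε : ℝ, 0 < ε → ∃ δ : ℝ, 0 < δ ∧ ∀ x ∈ Sig, distTo x Y < δ →
    ∀ n : ℕ, 0 < n → distTo (shift^[n] x) Y < ε) ∧
  (∃ δ : ℝ, 0 < δ ∧ ∀ x ∈ Sig, distTo x Y < δ →
    Filter.Tendsto (fun n : ℕ => distTo (shift^[n] x) Y) Filter.atTop (nhds 0))

end Subshift

namespace LGraph

variable {A : Type} {G : LGraph A}

lemma aux_walk_nil_eq {a b : G.V} (h : G.Walk a b []) : a = b := by cases h; rfl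

lemma aux_walk_head {a b : G.V} {e : G.E} {es : List G.E} (h : G.Walk a b (e :: es)) :
    a = G.s e := by cases h; rfl

lemma aux_walk_end {b : G.V} : ∀ (es : List G.E) (a : G.V), G.Walk a b es → es ≠ [] →
    ∃ e ∈ es, G.t e = b := by
  intro es
  induction es with
  | nil => intro a _ hne; exact absurd rfl hne
  | cons e es ih =>
    intro a h _
    cases h with
    | cons _ h' =>
      by_cases hes : es = []
      · subst hes
        exact ⟨e, (List.mem_cons_self : e ∈ [e]), aux_walk_nil_eq h'⟩
      · obtain ⟨e', he', ht⟩ := ih _ h' hes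
        exact ⟨e', List.mem_cons_of_mem _ he', ht⟩

lemma aux_walk_take_drop {b : G.V} : ∀ (es : List G.E) (a : G.V), G.Walk a b es → ∀ k : ℕ,
    ∃ c, G.Walk a c (es.take k) ∧ G.Walk c b (es.drop k) := by
  intro es
  induction es with
  | nil =>
    intro a h k
    exact ⟨a, by simpa using Walk.nil a, by simpa using h⟩
  | cons e es ih =>
    intro a h k
    cases h with
    | cons _ h' =>
      cases k with
      | zero => exact ⟨G.s e, Walk.nil _, by simpa using Walk.cons e h'⟩
      | succ k =>
        obtain ⟨c, h1, h2⟩ := ih _ h' k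
        exact ⟨c, by simpa using Walk.cons e h1, by simpa using h2⟩

lemma aux_walk_in {S : Set G.V} (hterm : G.ForwardClosed S) {b : G.V} :
    ∀ (es : List G.E) (a : G.V), G.Walk a b es → a ∈ S →
      b ∈ S ∧ ∀ e ∈ es, G.s e ∈ S ∧ G.t e ∈ S := by
  intro es
  induction es with
  | nil => intro a h ha; exact ⟨(aux_walk_nil_eq h) ▸ ha, by simp⟩
  | cons e es ih =>
    intro a h ha
    cases h with
    | cons _ h' =>
      have hte : G.t e ∈ S := hterm e ha
      obtain ⟨hb, hall⟩ := ih _ h' hte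
      refine ⟨hb, ?_⟩
      intro e' he'
      rcases List.mem_cons.mp he' with rfl | he'
      · exact ⟨ha, hte⟩
      · exact hall e' he'

lemma aux_presIn_infix {T : Set G.V} {w w' : List A} (hp : G.PresIn T w) (hinf : w' <:+: w) :
    G.PresIn T w' := by
  obtain ⟨a, b, es, hw, hmap, ha, hb, hall⟩ := hp
  obtain ⟨s, t, hst⟩ := hinf
  obtain ⟨c, h1, h2⟩ := aux_walk_take_drop es a hw s.length
  obtain ⟨d, h3, h4⟩ := aux_walk_take_drop _ c h2 w'.length
  have hdropmap : (es.drop s.length).map G.lab = w' ++ t := by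
    rw [List.map_drop, hmap, ← hst, List.append_assoc, List.drop_left]
  have hmap' : ((es.drop s.length).take w'.length).map G.lab = w' := by
    rw [List.map_take, hdropmap, List.take_left]
  have hcmem : c ∈ T := by
    cases hd : es.drop s.length with
    | nil => rw [hd] at h2; exact (aux_walk_nil_eq h2).symm ▸ hb
    | cons e' es' =>
      rw [hd] at h2
      rw [aux_walk_head h2]
      exact (hall e' (List.mem_of_mem_drop (hd ▸ (List.mem_cons_self : e' ∈ e' :: es')))).1
  have hdmem : d ∈ T := by
    by_cases he : (es.drop s.length).take w'.length = []
    · rw [he] at h3; exact (aux_walk_nil_eq h3) ▸ hcmem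
    · obtain ⟨e', he', ht⟩ := aux_walk_end _ _ h3 he
      exact ht ▸ (hall e' (List.mem_of_mem_drop (List.mem_of_mem_take he'))).2
  exact ⟨c, d, _, h3, hmap', hcmem, hdmem,
    fun e he => hall e (List.mem_of_mem_drop (List.mem_of_mem_take he))⟩

lemma aux_split {S : Set G.V} (hterm : G.ForwardClosed S) {b : G.V} :
    ∀ (es : List G.E) (a : G.V), G.Walk a b es → a ∈ Sᶜ →
      (b ∈ Sᶜ ∧ ∀ e ∈ es, G.s e ∈ Sᶜ ∧ G.t e ∈ Sᶜ) ∨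
      ∃ k < es.length, (∀ e ∈ es.take k, G.s e ∈ Sᶜ ∧ G.t e ∈ Sᶜ) ∧
        (∀ e ∈ es.drop (k+1), G.s e ∈ S ∧ G.t e ∈ S) ∧ b ∈ S := by
  intro es
  induction es with
  | nil =>
    intro a h ha
    exact Or.inl ⟨(aux_walk_nil_eq h) ▸ ha, by simp⟩
  | cons e es ih =>
    intro a h ha
    cases h with
    | cons _ h' =>
      by_cases hte : G.t e ∈ S
      · right
        obtain ⟨hb, hall⟩ := aux_walk_in hterm es _ h' hte
        exact ⟨0, by simp, by simp, by simpa using hall, hb⟩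
      · have hte' : G.t e ∈ Sᶜ := hte
        rcases ih _ h' hte' with ⟨hb, hall⟩ | ⟨k, hk, hC, hS, hb⟩
        · left
          refine ⟨hb, ?_⟩
          intro e' he'
          rcases List.mem_cons.mp he' with rfl | he'
          · exact ⟨ha, hte'⟩
          · exact hall e' he'
        · right
          refine ⟨k+1, by simpa using Nat.succ_lt_succ hk, ?_, ?_, hb⟩
          · intro e' he'
            rw [List.take_succ_cons] at he'
            rcases List.mem_cons.mp he' with rfl | he'
            · exact ⟨ha, hte'⟩
            · exact hC e' he'
          · intro e' he'
            exact hS e' (by simpa using he')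

lemma aux_present_split {S : Set G.V} (hterm : G.ForwardClosed S) {w : List A}
    (hw : w ∈ G.Lang) :
    G.PresIn Sᶜ w ∨ ∃ k ≤ w.length, G.PresIn S (w.drop k) ∧
      (k = 0 ∨ G.PresIn Sᶜ (w.take (k-1))) := by
  obtain ⟨a, b, es, hwalk, hmap⟩ := hw
  have hlen : es.length = w.length := by rw [← hmap, List.length_map]
  by_cases ha : a ∈ S
  · obtain ⟨hb, hall⟩ := aux_walk_in hterm es a hwalk ha
    exact Or.inr ⟨0, Nat.zero_le _,
      by rw [List.drop_zero]; exact ⟨a, b, es, hwalk, hmap, ha, hb, hall⟩, Or.inl rfl⟩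
  · rcases aux_split hterm es a hwalk ha with ⟨hb, hall⟩ | ⟨k, hk, hC, hS, hb⟩
    · exact Or.inl ⟨a, b, es, hwalk, hmap, ha, hb, hall⟩
    · right
      refine ⟨k+1, by omega, ?_, Or.inr ?_⟩
      · obtain ⟨c, h1, h2⟩ := aux_walk_take_drop es a hwalk (k+1)
        have hcm : c ∈ S := by
          cases hd : es.drop (k+1) with
          | nil => rw [hd] at h2; exact (aux_walk_nil_eq h2).symm ▸ hb
          | cons e' es' =>
            rw [hd] at h2
            rw [aux_walk_head h2]
            exact (hS e' (hd ▸ (List.mem_cons_self : e' ∈ e' :: es'))).1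
        exact ⟨c, b, es.drop (k+1), h2, by rw [List.map_drop, hmap], hcm, hb, hS⟩
      · obtain ⟨d, h1, h2⟩ := aux_walk_take_drop es a hwalk k
        have hdm : d ∈ Sᶜ := by
          by_cases he : es.take k = []
          · rw [he] at h1; exact (aux_walk_nil_eq h1) ▸ ha
          · obtain ⟨e', he', ht⟩ := aux_walk_end _ _ h1 he
            exact ht ▸ (hC e' he').2
        have hk1 : (k+1) - 1 = k := rfl
        rw [hk1]
        exact ⟨a, d, es.take k, h1, by rw [List.map_take, hmap], ha, hdm, hC⟩

end LGraph

theorem stmt8 {A : Type} (G : LGraph A) (S : Set G.V)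
    (hsat : G.SaturatedSet S) (hterm : G.ForwardClosed S)
    (m : ℕ) (hm : ∀ w : List A, m ≤ w.length → ¬(G.PresIn S w ∧ G.PresIn Sᶜ w))
    (u v z : List A) (l n : ℕ) (hl : u.length = l) (h2m : 2 * m + 1 ≤ l)
    (hu : G.PresIn S u) (hchain : ChainWord G.Lang u v n z) :
    G.PresIn S (v.drop m) := by
  obtain ⟨huv, hzlen, hztake, hzdrop, hfac⟩ := hchain
  rw [hl] at hztake hzlen huv
  have key : ∀ i, i ≤ n → G.PresIn S ((z.drop (i+m)).take (l-m)) := by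
    intro i
    induction i using Nat.strong_induction_on with
    | _ i IH =>
    intro hin
    rcases Nat.eq_zero_or_pos i with rfl | hipos
    · have h0 : u.drop m = (z.drop (0+m)).take (l-m) := by
        conv_lhs => rw [← hztake]
        rw [List.drop_take, Nat.zero_add]
      rw [← h0]
      exact LGraph.aux_presIn_infix hu (List.IsSuffix.isInfix (List.drop_suffix m u))
    · set W := (z.drop i).take l with hW
      have hWlen : W.length = l := by
        rw [hW, List.length_take, List.length_drop, hzlen]; omega
      have hWlang : W ∈ G.Lang := by
        apply hfac
        · exact ((List.take_prefix l (z.drop i)).isInfix).trans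
            ((List.drop_suffix i z).isInfix)
        · rw [hWlen, hl]
      set c := (z.drop i).take m with hc
      have hclen : c.length = m := by
        rw [hc, List.length_take, List.length_drop, hzlen]; omega
      have hcW : c = W.take m := by
        rw [hW, hc, List.take_take]
        congr 1
        omega
      have hcS : G.PresIn S c := by
        rcases le_or_gt i (m+1) with him | him
        · have hcu : c = (u.drop i).take m := by
            rw [← hztake, List.drop_take, List.take_take, hc]
            congr 1
            omega
          rw [hcu]
          exact LGraph.aux_presIn_infix hu
            (((List.take_prefix m (u.drop i)).isInfix).trans
              ((List.drop_suffix i u).isInfix))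
        · have hkey := IH (i-m-1) (by omega) (by omega)
          have hR : (z.drop (i-m-1+m)).take (l-m) = (z.drop (i-1)).take (l-m) := by
            congr 2
            omega
          rw [hR] at hkey
          have e1 : i - 1 + 1 = i := by omega
          have hcR : (((z.drop (i-1)).take (l-m)).drop 1).take m = c := by
            rw [List.drop_take, List.drop_drop, List.take_take, e1, hc]
            congr 1
            omega
          rw [← hcR]
          exact LGraph.aux_presIn_infix hkey
            (((List.take_prefix m _).isInfix).trans
              ((List.drop_suffix 1 _).isInfix))
      rcases LGraph.aux_present_split hterm hWlang with hWC | ⟨k, hkle, hSdrop, hor⟩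
      · exact absurd ⟨hcS, LGraph.aux_presIn_infix hWC
          (by rw [hcW]; exact (List.take_prefix m W).isInfix)⟩ (hm c (by omega))
      · rcases le_or_gt k m with hkm | hkm
        · have e3 : k + (m-k) = m := by omega
          have hgoal : (W.drop k).drop (m-k) = (z.drop (i+m)).take (l-m) := by
            rw [List.drop_drop, e3, hW, List.drop_take, List.drop_drop]
          rw [← hgoal]
          exact LGraph.aux_presIn_infix hSdrop
            (List.IsSuffix.isInfix (List.drop_suffix (m-k) _))
        · exfalso
          rcases hor with h0 | hCtake
          · omega
          · have hcC : G.PresIn Sᶜ c := by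
              have hck : c = (W.take (k-1)).take m := by
                rw [List.take_take, hcW]
                congr 1
                omega
              rw [hck]
              exact LGraph.aux_presIn_infix hCtake (List.take_prefix m _).isInfix
            exact hm c (by omega) ⟨hcS, hcC⟩
  have hfin := key n le_rfl
  have hv : (z.drop (n+m)).take (l-m) = v.drop m := by
    rw [← hzdrop, List.drop_drop]
    exact List.take_of_length_le (by rw [List.length_drop, hzlen]; omega)
  exact hv ▸ hfin
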